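/- The subspace L_n(X₁,...,Xₙ) of the free Lie algebra over ℚ spanned by Lie brackets in which each of the n generators appears exactly once has dimension (n-1)!. -/

import Mathlib

/-- `IsMultilinearBracket n s x` means that `x` is an iterated Lie bracket of the generators
of the free Lie algebra on `n` variables, in which each generator indexed in `s` appears
exactly once (and no other generator appears). -/
inductive IsMultilinearBracket (n : ℕ) : Finset (Fin n) → FreeLieAlgebra ℚ (Fin n) → Prop
  | of (i : Fin n) : IsMultilinearBracket n {i} (FreeLieAlgebra.of ℚ i)
  | br {s t : Finset (Fin n)} {x y : FreeLieAlgebra ℚ (Fin n)} :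
      IsMultilinearBracket n s x → IsMultilinearBracket n t y → Disjoint s t →
      IsMultilinearBracket n (s ∪ t) ⁅x, y⁆

namespace MLBaux
variable {N : ℕ}

attribute [local instance 100] LieRing.ofAssociativeRing

/-- Right-normed bracket `[x_{l₁},[x_{l₂},...,[x_{l_k}, x_j]]]`. -/
noncomputable def R (l : List (Fin N)) (j : Fin N) : FreeLieAlgebra ℚ (Fin N) :=
  l.foldr (fun i acc => ⁅FreeLieAlgebra.of ℚ i, acc⁆) (FreeLieAlgebra.of ℚ j)

@[simp] lemma R_nil (j : Fin N) : R [] j = FreeLieAlgebra.of ℚ j := rfl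
@[simp] lemma R_cons (i : Fin N) (l : List (Fin N)) (j : Fin N) :
    R (i :: l) j = ⁅FreeLieAlgebra.of ℚ i, R l j⁆ := rfl

noncomputable def π : FreeLieAlgebra ℚ (Fin N) →ₗ⁅ℚ⁆ FreeAlgebra ℚ (Fin N) :=
  FreeLieAlgebra.lift ℚ (FreeAlgebra.ι ℚ)

@[simp] lemma π_of (i : Fin N) : π (FreeLieAlgebra.of ℚ i) = FreeAlgebra.ι ℚ i :=
  FreeLieAlgebra.lift_of_apply _ i

noncomputable def E : FreeAlgebra ℚ (Fin N) ≃ₐ[ℚ] MonoidAlgebra ℚ (FreeMonoid (Fin N)) :=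
  FreeAlgebra.equivMonoidAlgebraFreeMonoid

@[simp] lemma E_ι (i : Fin N) :
    E (FreeAlgebra.ι ℚ i) = MonoidAlgebra.single (FreeMonoid.of i) (1 : ℚ) := by
  simp [E, FreeAlgebra.equivMonoidAlgebraFreeMonoid, MonoidAlgebra.of_apply]

/-- coefficient of the word `y` -/
noncomputable def c (y : List (Fin N)) (x : FreeAlgebra ℚ (Fin N)) : ℚ :=
  (E x).coeff (FreeMonoid.ofList y)

lemma c_ι_mul_cons (i : Fin N) (y : List (Fin N)) (z : FreeAlgebra ℚ (Fin N)) :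
    c (i :: y) (FreeAlgebra.ι ℚ i * z) = c y z := by
  unfold c
  rw [map_mul, E_ι, FreeMonoid.ofList_cons,
    MonoidAlgebra.coeff_single_mul_eq_mul_coeff (FreeMonoid.ofList y) (fun a _ => mul_right_inj _), one_mul]

lemma c_ι_mul_ne {i : Fin N} {y : List (Fin N)} (h : ∀ u, y ≠ i :: u)
    (z : FreeAlgebra ℚ (Fin N)) : c y (FreeAlgebra.ι ℚ i * z) = 0 := by
  unfold c
  rw [map_mul, E_ι]
  apply MonoidAlgebra.single_mul_apply_of_not_exists_mul
  rintro ⟨d, hd⟩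
  exact h (FreeMonoid.toList d) (congrArg FreeMonoid.toList hd)

lemma c_mul_ι_ne {i : Fin N} {y : List (Fin N)} (h : ∀ u, y ≠ u ++ [i])
    (z : FreeAlgebra ℚ (Fin N)) : c y (z * FreeAlgebra.ι ℚ i) = 0 := by
  unfold c
  rw [map_mul, E_ι]
  apply MonoidAlgebra.mul_single_apply_of_not_exists_mul
  rintro ⟨d, hd⟩
  exact h (FreeMonoid.toList d) (congrArg FreeMonoid.toList hd)

@[simp] lemma c_sub (y : List (Fin N)) (a b : FreeAlgebra ℚ (Fin N)) :
    c y (a - b) = c y a - c y b := by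
  simp only [c, map_sub, MonoidAlgebra.coeff_sub]; rw [Finsupp.sub_apply]

@[simp] lemma c_of (j : Fin N) : c [j] (FreeAlgebra.ι ℚ j) = 1 := by
  simp [c, FreeMonoid.ofList_singleton, MonoidAlgebra.coeff_single]

/-- The key computation: coefficients of right-normed brackets pick out the word. -/
lemma c_π_R {l : List (Fin N)} {j : Fin N} (hl : l.Nodup) (hjl : j ∉ l) :
    ∀ w : List (Fin N), w.Perm l → c (w ++ [j]) (π (R l j)) = if w = l then 1 else 0 := by
  induction l with
  | nil => intro w hw; simp [List.Perm.eq_nil hw]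
  | cons i l ih =>
    intro w hw
    have hil : i ∉ l := (List.nodup_cons.mp hl).1
    have hji : j ≠ i := fun h => hjl (h ▸ (List.mem_cons_self : i ∈ i :: l))
    have hjl' : j ∉ l := fun h => hjl (List.mem_cons_of_mem _ h)
    rw [R_cons, LieHom.map_lie, π_of, Ring.lie_def, c_sub]
    have hz : c (w ++ [j]) (π (R l j) * FreeAlgebra.ι ℚ i) = 0 := by
      apply c_mul_ι_ne
      intro u hu
      have : j = i := by
        have := congrArg List.getLast? hu
        simpa using this
      exact hji this
    rw [hz, sub_zero]
    rcases w with _ | ⟨k, w'⟩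
    · exact absurd (List.Perm.length_eq hw) (by simp)
    by_cases hk : k = i
    · subst hk
      have hw' : w'.Perm l := (List.Perm.cons_inv (a := k)) hw
      rw [List.cons_append, c_ι_mul_cons, ih (List.nodup_cons.mp hl).2 hjl' w' hw']
      by_cases h : w' = l <;> simp [h]
    · have : c (k :: w' ++ [j]) (FreeAlgebra.ι ℚ i * π (R l j)) = 0 := by
        apply c_ι_mul_ne
        intro u hu
        exact hk (by simpa using congrArg List.head? hu)
      rw [this]
      have : k :: w' ≠ i :: l := fun h => hk (by injection h)
      simp [this]

lemma R_isMB {l : List (Fin N)} {j : Fin N} (hl : l.Nodup) (hjl : j ∉ l) :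
    IsMultilinearBracket N (l.toFinset ∪ {j}) (R l j) := by
  induction l with
  | nil => simpa using IsMultilinearBracket.of j
  | cons i l ih =>
    have hil : i ∉ l := (List.nodup_cons.mp hl).1
    have hji : j ≠ i := fun h => hjl (h ▸ (List.mem_cons_self : i ∈ i :: l))
    have h := IsMultilinearBracket.br (IsMultilinearBracket.of i)
      (ih (List.nodup_cons.mp hl).2 (fun h => hjl (List.mem_cons_of_mem _ h)))
      (by
        rw [Finset.disjoint_union_right]
        refine ⟨by simpa using hil, by simpa using hji.symm⟩)
    have hset : ({i} : Finset (Fin N)) ∪ (l.toFinset ∪ {j}) = (i :: l).toFinset ∪ {j} := by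
      ext k; simp [or_assoc]; tauto
    rw [R_cons]
    exact hset ▸ h

/-- span of right-normed brackets ending in `j`, with prefix letters `t`. -/
noncomputable def S (j : Fin N) (t : Finset (Fin N)) :
    Submodule ℚ (FreeLieAlgebra ℚ (Fin N)) :=
  Submodule.span ℚ {x | ∃ l : List (Fin N), l.Nodup ∧ j ∉ l ∧ l.toFinset = t ∧ x = R l j}

lemma ad_mem {j : Fin N} {s : Finset (Fin N)} {x : FreeLieAlgebra ℚ (Fin N)}
    (hx : IsMultilinearBracket N s x) :
    ∀ t : Finset (Fin N), ∀ y : FreeLieAlgebra ℚ (Fin N), Disjoint s t → j ∉ s →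
      y ∈ S j t → ⁅x, y⁆ ∈ S j (s ∪ t) := by
  induction hx with
  | of i =>
    intro t y hdisj hjs hy
    have hji : j ≠ i := by simpa using hjs
    have hit : i ∉ t := by simpa using hdisj
    refine Submodule.span_induction ?_ ?_ ?_ ?_ hy
    · rintro z ⟨l, hl, hjl, hlt, rfl⟩
      apply Submodule.subset_span
      refine ⟨i :: l, ?_, ?_, ?_, rfl⟩
      · exact List.nodup_cons.mpr ⟨fun h => hit (hlt ▸ List.mem_toFinset.mpr h), hl⟩
      · intro h
        rcases List.mem_cons.mp h with h | h
        · exact hji h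
        · exact hjl h
      · rw [← hlt]; simp only [List.toFinset_cons, Finset.insert_eq]
    · simp
    · intro a b _ _ ha hb
      rw [lie_add]; exact add_mem ha hb
    · intro r a _ ha
      rw [lie_smul]; exact Submodule.smul_mem _ r ha
  | br ha hb hab iha ihb =>
    rename_i s₁ s₂ a b
    intro t y hdisj hjs hy
    have hd1 : Disjoint s₁ t := (Finset.disjoint_union_left.mp hdisj).1
    have hd2 : Disjoint s₂ t := (Finset.disjoint_union_left.mp hdisj).2
    have hj1 : j ∉ s₁ := fun h => hjs (Finset.mem_union_left _ h)
    have hj2 : j ∉ s₂ := fun h => hjs (Finset.mem_union_right _ h)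
    rw [lie_lie]
    have h1 : ⁅a, ⁅b, y⁆⁆ ∈ S j (s₁ ∪ (s₂ ∪ t)) :=
      iha _ _ (Finset.disjoint_union_right.mpr ⟨hab, hd1⟩) hj1 (ihb _ _ hd2 hj2 hy)
    have h2 : ⁅b, ⁅a, y⁆⁆ ∈ S j (s₂ ∪ (s₁ ∪ t)) :=
      ihb _ _ (Finset.disjoint_union_right.mpr ⟨hab.symm, hd2⟩) hj2 (iha _ _ hd1 hj1 hy)
    rw [Finset.union_assoc]
    rw [Finset.union_left_comm] at h2
    exact sub_mem h1 h2

lemma mem_S {j : Fin N} {s : Finset (Fin N)} {x : FreeLieAlgebra ℚ (Fin N)}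
    (hx : IsMultilinearBracket N s x) (hjs : j ∈ s) : x ∈ S j (s.erase j) := by
  induction hx with
  | of i =>
    have : j = i := by simpa using hjs
    subst this
    apply Submodule.subset_span
    exact ⟨[], by simp, by simp, by simp, rfl⟩
  | br ha hb hab iha ihb =>
    rename_i s₁ s₂ a b
    rcases Finset.mem_union.mp hjs with hj | hj
    · have hj2 : j ∉ s₂ := fun h => (Finset.disjoint_left.mp hab hj) h
      have : ⁅b, a⁆ ∈ S j (s₂ ∪ s₁.erase j) :=
        ad_mem hb _ _ (Finset.disjoint_of_subset_right (Finset.erase_subset _ _) hab.symm)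
          hj2 (iha hj)
      have hset : s₂ ∪ s₁.erase j = (s₁ ∪ s₂).erase j := by
        rw [Finset.erase_union_distrib, Finset.erase_eq_of_notMem hj2, Finset.union_comm]
      rw [← lie_skew]
      exact neg_mem (hset ▸ this)
    · have hj1 : j ∉ s₁ := fun h => (Finset.disjoint_left.mp hab h) hj
      have : ⁅a, b⁆ ∈ S j (s₁ ∪ s₂.erase j) :=
        ad_mem ha _ _ (Finset.disjoint_of_subset_right (Finset.erase_subset _ _) hab)
          hj1 (ihb hj)
      have hset : s₁ ∪ s₂.erase j = (s₁ ∪ s₂).erase j := by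
        rw [Finset.erase_union_distrib, Finset.erase_eq_of_notMem hj1]
      exact hset ▸ this

variable {m : ℕ}

/-- word of a permutation -/
def pl (σ : Equiv.Perm (Fin m)) : List (Fin (m + 1)) :=
  List.ofFn fun k => (σ k).castSucc

lemma pl_nodup (σ : Equiv.Perm (Fin m)) : (pl σ).Nodup :=
  List.nodup_ofFn.mpr (Fin.castSucc_injective m |>.comp σ.injective)

lemma last_not_mem_pl (σ : Equiv.Perm (Fin m)) : Fin.last m ∉ pl σ := by
  simp only [pl, List.mem_ofFn, Set.mem_range]
  rintro ⟨b, hb⟩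
  exact (Fin.castSucc_lt_last (σ b)).ne hb

lemma pl_toFinset (σ : Equiv.Perm (Fin m)) :
    (pl σ).toFinset = Finset.univ.erase (Fin.last m) := by
  ext k
  simp only [List.mem_toFinset, pl, List.mem_ofFn, Finset.mem_erase, Finset.mem_univ, and_true,
    Set.mem_range]
  constructor
  · rintro ⟨b, rfl⟩; exact (Fin.castSucc_lt_last _).ne
  · intro hk
    exact ⟨σ.symm (k.castPred hk), by simp [Fin.castSucc_castPred]⟩

lemma pl_inj : Function.Injective (pl (m := m)) := by
  intro σ τ h
  have := List.ofFn_inj.mp h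
  exact Equiv.ext fun k => Fin.castSucc_injective m (congrFun this k)

/-- Any admissible list is `pl σ` for some permutation. -/
lemma exists_pl {l : List (Fin (m + 1))} (hl : l.Nodup)
    (hlt : l.toFinset = Finset.univ.erase (Fin.last m)) : ∃ σ : Equiv.Perm (Fin m), pl σ = l := by
  have hlen : l.length = m := by
    have := congrArg Finset.card hlt
    rwa [List.toFinset_card_of_nodup hl, Finset.card_erase_of_mem (Finset.mem_univ _),
      Finset.card_univ, Fintype.card_fin, Nat.add_sub_cancel] at this
  have hmem : ∀ k ∈ l, k ≠ Fin.last m := by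
    intro k hk
    have := hlt ▸ List.mem_toFinset.mpr hk
    exact (Finset.mem_erase.mp this).1
  set g : Fin m → Fin m := fun k =>
    (l.get ⟨k.1, by rw [hlen]; exact k.2⟩).castPred (hmem _ (l.get_mem _)) with hg
  have hginj : Function.Injective g := by
    intro a b hab
    have h1 : l.get ⟨a.1, by rw [hlen]; exact a.2⟩ = l.get ⟨b.1, by rw [hlen]; exact b.2⟩ := by
      have := congrArg Fin.castSucc hab
      simpa [hg, Fin.castSucc_castPred] using this
    have h2 := (List.Nodup.get_inj_iff hl).mp h1
    have h3 : (a : ℕ) = b := by simpa using h2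
    exact Fin.ext h3
  have hgbij : Function.Bijective g := Finite.injective_iff_bijective.mp hginj
  refine ⟨Equiv.ofBijective g hgbij, ?_⟩
  apply List.ext_get (by simp [pl, hlen])
  intro i h1 h2
  simp only [pl, List.get_ofFn, Equiv.ofBijective_apply, hg, Fin.castSucc_castPred]
  congr 1

/-- The candidate basis family indexed by permutations. -/
noncomputable def B (σ : Equiv.Perm (Fin m)) : FreeLieAlgebra ℚ (Fin (m + 1)) :=
  R (pl σ) (Fin.last m)

lemma c_π_B (τ σ : Equiv.Perm (Fin m)) :
    c (pl τ ++ [Fin.last m]) (π (B σ)) = if τ = σ then 1 else 0 := by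
  rw [B, c_π_R (pl_nodup σ) (last_not_mem_pl σ) (pl τ)
    (List.perm_of_nodup_nodup_toFinset_eq (pl_nodup τ) (pl_nodup σ)
      (by rw [pl_toFinset, pl_toFinset]))]
  by_cases h : τ = σ
  · simp [h]
  · rw [if_neg (fun hh => h (pl_inj hh)), if_neg h]

/-- the coefficient functional as a linear map -/
noncomputable def cL (y : List (Fin N)) : FreeAlgebra ℚ (Fin N) →ₗ[ℚ] ℚ :=
  (Finsupp.lapply (FreeMonoid.ofList y)).comp
    ((MonoidAlgebra.coeffLinearEquiv ℚ).toLinearMap.comp E.toLinearMap)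

lemma cL_apply (y : List (Fin N)) (x : FreeAlgebra ℚ (Fin N)) : cL y x = c y x := rfl

lemma B_indep : LinearIndependent ℚ (B (m := m)) := by
  rw [linearIndependent_iff']
  intro s g hsum τ hτ
  have h := congrArg ((cL (pl τ ++ [Fin.last m])).comp π.toLinearMap) hsum
  simp only [map_sum, LinearMap.map_smul, LinearMap.comp_apply, LieHom.coe_toLinearMap,
    map_zero] at h
  have : ∀ σ ∈ s, g σ • cL (pl τ ++ [Fin.last m]) (π (B σ)) =
      if τ = σ then g σ else 0 := by
    intro σ _
    rw [cL_apply, c_π_B]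
    by_cases hh : τ = σ <;> simp [hh]
  rw [Finset.sum_congr rfl this, Finset.sum_ite_eq _ τ] at h
  simpa [hτ] using h

lemma span_eq :
    Submodule.span ℚ {x : FreeLieAlgebra ℚ (Fin (m + 1)) |
        IsMultilinearBracket (m + 1) Finset.univ x}
      = Submodule.span ℚ (Set.range (B (m := m))) := by
  apply le_antisymm
  · rw [Submodule.span_le]
    intro x hx
    have hxS : x ∈ S (Fin.last m) (Finset.univ.erase (Fin.last m)) :=
      mem_S hx (Finset.mem_univ _)
    refine (Submodule.span_le.mpr ?_) hxS
    rintro z ⟨l, hl, hjl, hlt, rfl⟩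
    obtain ⟨σ, rfl⟩ := exists_pl hl hlt
    exact Submodule.subset_span ⟨σ, rfl⟩
  · rw [Submodule.span_le]
    rintro z ⟨σ, rfl⟩
    apply Submodule.subset_span
    have h := R_isMB (pl_nodup σ) (last_not_mem_pl σ)
    have hset : (pl σ).toFinset ∪ {Fin.last m} = Finset.univ := by
      rw [pl_toFinset]
      ext k
      by_cases hk : k = Fin.last m <;> simp [hk]
    exact hset ▸ h

end MLBaux

/-- The subspace `L_n(X₁,...,Xₙ)` of the free Lie algebra over `ℚ` spanned by the Lie
brackets in which each of the `n` generators appears exactly once has dimension `(n-1)!`. -/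
theorem finrank_multilinear_component (n : ℕ) (hn : 1 ≤ n) :
    Module.finrank ℚ
        (Submodule.span ℚ {x : FreeLieAlgebra ℚ (Fin n) | IsMultilinearBracket n Finset.univ x})
      = (n - 1).factorial := by
  obtain ⟨m, rfl⟩ : ∃ m, n = m + 1 := ⟨n - 1, (Nat.succ_pred_eq_of_pos hn).symm⟩
  rw [MLBaux.span_eq, finrank_span_eq_card MLBaux.B_indep, Fintype.card_perm, Fintype.card_fin,
    Nat.add_sub_cancel]
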